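/- For every positive integer n, the rank of appearance satisfies z(n) ≤ 2n. -/

import Mathlib

open Polynomial

lemma binet_aux {R : Type*} [CommRing R] (s : R) (hs : s^2 = 5) (n : ℕ) :
    (1+s)^n - (1-s)^n = 2^n * s * (Nat.fib n : R) := by
  induction n using Nat.twoStepInduction with
  | zero => simp
  | one => simp [Nat.fib_one]; ring
  | more n ih1 ih2 =>
    have key : (1+s)^(n+2) - (1-s)^(n+2)
        = 2*((1+s)^(n+1) - (1-s)^(n+1)) + 4*((1+s)^n - (1-s)^n) := by
      have e1 : (1+s)^(n+2) = (1+s)^n * (1+s)^2 := by ring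
      have e2 : (1-s)^(n+2) = (1-s)^n * (1-s)^2 := by ring
      rw [e1, e2]
      ring_nf
      linear_combination ((1+s)^n - (1-s)^n) * hs
    rw [key, ih1, ih2, Nat.fib_add_two]
    push_cast
    ring

lemma prime_dvd_fib_sub_or_add (p : ℕ) (hp : p.Prime) (h2 : p ≠ 2) (h5 : p ≠ 5) :
    p ∣ Nat.fib (p-1) ∨ p ∣ Nat.fib (p+1) := by
  haveI : Fact p.Prime := ⟨hp⟩
  set K := ZMod p with hK
  have h2K : (2 : K) ≠ 0 := by
    have : ((2:ℕ) : K) ≠ 0 := by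
      rw [Ne, ZMod.natCast_eq_zero_iff]
      exact fun h => (h2 ((Nat.prime_dvd_prime_iff_eq hp Nat.prime_two).mp h)).elim
    simpa using this
  have h5K : (5 : K) ≠ 0 := by
    have : ((5:ℕ) : K) ≠ 0 := by
      rw [Ne, ZMod.natCast_eq_zero_iff]
      exact fun h => h5 ((Nat.prime_dvd_prime_iff_eq hp (by norm_num)).mp h) |>.elim
    simpa using this
  set f : K[X] := X^2 - C 5 with hf
  have hdeg : f.degree = 2 := by
    rw [hf]
    compute_degree!
  haveI : Nontrivial (AdjoinRoot f) := AdjoinRoot.nontrivial f (by rw [hdeg]; norm_num)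
  set R := AdjoinRoot f with hR
  have hinj : Function.Injective (algebraMap K R) := (algebraMap K R).injective
  haveI : CharP R p := charP_of_injective_algebraMap hinj p
  set s : R := AdjoinRoot.root f with hsdef
  have hs : s^2 = 5 := by
    have h0 := AdjoinRoot.eval₂_root f
    rw [hf] at h0
    simp only [eval₂_sub, eval₂_pow, eval₂_X, eval₂_C] at h0
    have : ((AdjoinRoot.of f) 5 : R) = (5 : R) := by
      rw [show ((5:K)) = ((5:ℕ):K) by norm_num, map_natCast]
      norm_num
    rw [this] at h0
    have := sub_eq_zero.mp h0
    simpa [hsdef, hf] using this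
  -- epsilon
  set e : K := 5^((p-1)/2) with he
  have hodd : p % 2 = 1 := hp.eq_one_or_self_of_dvd 2 |> fun _ => Nat.odd_iff.mp (hp.odd_of_ne_two h2)
  have he2 : e^2 = 1 := by
    rw [he, ← pow_mul]
    have : (p-1)/2 * 2 = p - 1 := Nat.div_mul_cancel (by omega : 2 ∣ p - 1)
    rw [this, ZMod.pow_card_sub_one_eq_one h5K]
  have hsp : s^p = algebraMap K R e * s := by
    have hper : p = 2 * ((p-1)/2) + 1 := by omega
    calc s^p = (s^2)^((p-1)/2) * s := by rw [← pow_mul, ← pow_succ, ← hper]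
    _ = (5:R)^((p-1)/2) * s := by rw [hs]
    _ = algebraMap K R e * s := by
        rw [he, map_pow]
        norm_num [map_ofNat]
  have hee : e = 1 ∨ e = -1 := by
    have h' : e * e = 1 := by rw [← he2]; ring
    exact mul_self_eq_one_iff.mp h'
  -- the units
  have huv : (1+s) * (1-s) = -4 := by linear_combination -hs
  have h4K : (-4 : K) ≠ 0 := by
    intro h
    have h4 : (4:K) = 0 := neg_eq_zero.mp h
    have h44 : (2:K) * 2 = 0 := by rw [← h4]; norm_num
    rcases mul_eq_zero.mp h44 with h|h <;> exact h2K h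
  have h4R : ∃ c : R, (-4 : R) * c = 1 := by
    refine ⟨algebraMap K R (-4)⁻¹, ?_⟩
    have hm4 : (-4 : R) = algebraMap K R (-4) := by
      rw [map_neg, map_ofNat]
    rw [hm4, ← map_mul, mul_inv_cancel₀ h4K, map_one]
  obtain ⟨c4, hc4⟩ := h4R
  have hu_unit : IsUnit (1+s) := IsUnit.of_mul_eq_one ((1-s) * c4) (by rw [← mul_assoc, huv, hc4])
  have hv_unit : IsUnit (1-s) := IsUnit.of_mul_eq_one ((1+s) * c4) (by
    rw [← mul_assoc, mul_comm (1-s) (1+s), huv, hc4])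
  have hup : (1+s)^p = 1 + s^p := by
    rw [add_pow_char, one_pow]
  have hvp : (1-s)^p = 1 - s^p := by
    rw [sub_pow_char, one_pow]
  -- key: pull back to K
  have key : ∀ N : ℕ, (1+s)^N - (1-s)^N = 0 → p ∣ Nat.fib N := by
    intro N hN
    rw [binet_aux s hs] at hN
    have : s * ((2:R)^N * s * (Nat.fib N : R)) = 0 := by rw [hN, mul_zero]
    have h5f : (2:R)^N * 5 * (Nat.fib N : R) = 0 := by
      rw [← this]; linear_combination (-(2:R)^N * (Nat.fib N : R)) * hs
    have hcast : algebraMap K R ((2:K)^N * 5 * (Nat.fib N : K)) = 0 := by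
      rw [map_mul, map_mul, map_pow, map_natCast, map_ofNat, map_ofNat]
      exact h5f
    have hK0 : (2:K)^N * 5 * (Nat.fib N : K) = 0 := by
      apply hinj
      rw [hcast, map_zero]
    have : (Nat.fib N : K) = 0 := by
      rcases mul_eq_zero.mp hK0 with h | h
      · rcases mul_eq_zero.mp h with h | h
        · exact absurd h (pow_ne_zero _ h2K)
        · exact absurd h h5K
      · exact h
    exact (ZMod.natCast_eq_zero_iff _ _).mp this
  rcases hee with he1 | hem1
  · left
    apply key
    have hsps : s^p = s := by rw [hsp, he1, map_one, one_mul]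
    have hu : (1+s)^p = 1+s := by rw [hup, hsps]
    have hv : (1-s)^p = 1-s := by rw [hvp, hsps]
    have hp1 : (1+s)^(p-1) = 1 := by
      have : (1+s)^(p-1) * (1+s) = 1 * (1+s) := by
        rw [one_mul, ← pow_succ]
        have : p - 1 + 1 = p := by omega
        rw [this, hu]
      exact hu_unit.mul_right_cancel this
    have hp2 : (1-s)^(p-1) = 1 := by
      have : (1-s)^(p-1) * (1-s) = 1 * (1-s) := by
        rw [one_mul, ← pow_succ]
        have : p - 1 + 1 = p := by omega
        rw [this, hv]
      exact hv_unit.mul_right_cancel this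
    rw [hp1, hp2, sub_self]
  · right
    apply key
    have hsps : s^p = -s := by rw [hsp, hem1, map_neg, map_one, neg_one_mul]
    have hu : (1+s)^(p+1) = -4 := by
      rw [pow_succ, hup, hsps]
      linear_combination -hs
    have hv : (1-s)^(p+1) = -4 := by
      rw [pow_succ, hvp, hsps]
      linear_combination -hs
    rw [hu, hv, sub_self]

open Nat in
lemma fib_mul_cong (m' k : ℕ) :
    ((fib (m'+1) : ℤ))^2 ∣ ((fib ((k+1)*(m'+1)) : ℤ) - (k+1) * fib (m'+1) * (fib (m'+2))^k)
    ∧ ((fib (m'+1) : ℤ))^2 ∣ ((fib ((k+1)*(m'+1)+1) : ℤ) - (fib (m'+2))^(k+1)) := by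
  set m := m' + 1 with hm
  induction k with
  | zero =>
    constructor
    · simp [hm]
    · simp [hm]
  | succ k ih =>
    obtain ⟨⟨t1, ht1⟩, ⟨t2, ht2⟩⟩ := ih
    have hrec1 : fib ((k+2)*m) = fib ((k+1)*m) * fib m' + fib ((k+1)*m+1) * fib m := by
      have harg : (k+2)*m = (k+1)*m + m' + 1 := by rw [hm]; ring
      rw [harg, Nat.fib_add]
    have hrec2 : fib ((k+2)*m+1) = fib ((k+1)*m) * fib m + fib ((k+1)*m+1) * fib (m+1) := by
      have harg : (k+2)*m + 1 = (k+1)*m + m + 1 := by ring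
      rw [harg, Nat.fib_add]
    have hfm' : (fib m' : ℤ) = fib (m+1) - fib m := by
      have : fib (m+1) = fib m' + fib m := by
        rw [hm]; exact Nat.fib_add_two
      rw [this]; push_cast; ring
    have hm2 : (fib (m'+2) : ℤ) = fib (m+1) := by rw [hm]
    rw [hm2] at ht1 ht2
    constructor
    · refine ⟨t1 * (fib (m+1) - fib m) + t2 * fib m - (k+1) * (fib (m+1))^k, ?_⟩
      have h1 : (fib ((k+2)*m) : ℤ) = fib ((k+1)*m) * fib m' + fib ((k+1)*m+1) * fib m := by
        exact_mod_cast congrArg (fun x : ℕ => (x:ℤ)) hrec1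
      rw [h1, hfm', hm2]
      push_cast
      linear_combination ((fib (m+1) : ℤ) - fib m) * ht1 + (fib m : ℤ) * ht2
    · refine ⟨t1 * fib m + t2 * fib (m+1) + (k+1) * (fib (m+1) : ℤ)^k, ?_⟩
      have h2 : (fib ((k+2)*m+1) : ℤ) = fib ((k+1)*m) * fib m + fib ((k+1)*m+1) * fib (m+1) := by
        exact_mod_cast congrArg (fun x : ℕ => (x:ℤ)) hrec2
      rw [h2, hm2]
      push_cast
      linear_combination (fib m : ℤ) * ht1 + (fib (m+1) : ℤ) * ht2

lemma lift_lemma (p m e : ℕ) (he : 1 ≤ e) (h : p^e ∣ Nat.fib m) :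
    p^(e+1) ∣ Nat.fib (p * m) := by
  rcases Nat.eq_zero_or_pos m with rfl | hmpos
  · simpa using h
  rcases Nat.eq_zero_or_pos p with rfl | hppos
  · simp
  obtain ⟨m', rfl⟩ : ∃ m', m = m' + 1 := ⟨m - 1, by omega⟩
  obtain ⟨p', rfl⟩ : ∃ p', p = p' + 1 := ⟨p - 1, by omega⟩
  obtain ⟨hd, -⟩ := fib_mul_cong m' p'
  obtain ⟨t, ht⟩ := hd
  -- fib ((p'+1)*(m'+1)) = (p'+1) * fib(m'+1) * c^p' + fib(m'+1)^2 * t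
  have hz : ((p'+1:ℕ)^(e+1) : ℤ) ∣ (Nat.fib ((p'+1) * (m'+1)) : ℤ) := by
    have hF : ((p'+1:ℕ)^e : ℤ) ∣ (Nat.fib (m'+1) : ℤ) := by exact_mod_cast h
    have h1 : ((p'+1:ℕ)^(e+1) : ℤ) ∣ (p'+1 : ℤ) * Nat.fib (m'+1) * (Nat.fib (m'+2))^p' := by
      obtain ⟨u, hu⟩ := hF
      refine ⟨u * (Nat.fib (m'+2))^p', ?_⟩
      rw [hu]
      push_cast
      ring
    have h2 : ((p'+1:ℕ)^(e+1) : ℤ) ∣ ((Nat.fib (m'+1) : ℤ))^2 * t := by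
      obtain ⟨u, hu⟩ := hF
      have : ((p'+1:ℕ)^(e+1) : ℤ) ∣ ((p'+1:ℕ)^e : ℤ)^2 := by
        push_cast
        rw [← pow_mul]
        exact pow_dvd_pow _ (by omega)
      exact dvd_mul_of_dvd_left (this.trans (by rw [hu]; exact ⟨u^2, by ring⟩)) t
    have : (Nat.fib ((p'+1) * (m'+1)) : ℤ)
        = (p'+1 : ℤ) * Nat.fib (m'+1) * (Nat.fib (m'+2))^p' + ((Nat.fib (m'+1) : ℤ))^2 * t := by
      linarith [ht]
    rw [this]
    exact dvd_add h1 h2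
  exact_mod_cast hz

lemma pow_dvd_fib_pow_mul (p z : ℕ) (hz : p ∣ Nat.fib z) :
    ∀ e, p^(e+1) ∣ Nat.fib (p^e * z)
  | 0 => by simpa using hz
  | (e+1) => by
    have ih := pow_dvd_fib_pow_mul p z hz e
    have := lift_lemma p (p^e * z) (e+1) (by omega) ih
    have harg : p * (p^e * z) = p^(e+1) * z := by ring
    rwa [harg] at this

/-- The rank of appearance (entry point) of `m` in the Fibonacci sequence. -/
noncomputable def fibZ (m : ℕ) : ℕ := sInf {n | 0 < n ∧ m ∣ Nat.fib n}

/-- `ℓ(m) = lcm(m, z(m))`. -/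
noncomputable def ellF (m : ℕ) : ℕ := Nat.lcm m (fibZ m)

lemma fibZ_pos_of {n m : ℕ} (hm : 0 < m) (hd : n ∣ Nat.fib m) : 0 < fibZ n := by
  have hne : {k | 0 < k ∧ n ∣ Nat.fib k}.Nonempty := ⟨m, hm, hd⟩
  exact (Nat.sInf_mem hne).1

lemma dvd_fib_fibZ {n : ℕ} (h : 0 < fibZ n) : n ∣ Nat.fib (fibZ n) := by
  have hne : {k | 0 < k ∧ n ∣ Nat.fib k}.Nonempty := by
    by_contra hc
    rw [Set.not_nonempty_iff_eq_empty] at hc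
    rw [fibZ, hc, Nat.sInf_empty] at h
    exact absurd h (lt_irrefl 0)
  exact (Nat.sInf_mem hne).2

lemma fibZ_dvd_of_dvd {n m : ℕ} (hm : 0 < m) (hd : n ∣ Nat.fib m) : fibZ n ∣ m := by
  have hpos := fibZ_pos_of hm hd
  have hzf := dvd_fib_fibZ hpos
  have hg : n ∣ Nat.fib (Nat.gcd (fibZ n) m) := by
    rw [Nat.fib_gcd]
    exact Nat.dvd_gcd hzf hd
  have hgpos : 0 < Nat.gcd (fibZ n) m := Nat.gcd_pos_of_pos_right _ hm
  have hle : fibZ n ≤ Nat.gcd (fibZ n) m := Nat.sInf_le ⟨hgpos, hg⟩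
  have hge : Nat.gcd (fibZ n) m ≤ fibZ n := Nat.le_of_dvd hpos (Nat.gcd_dvd_left _ _)
  have heq : Nat.gcd (fibZ n) m = fibZ n := le_antisymm hge hle
  rw [← heq]
  exact Nat.gcd_dvd_right _ _

lemma dvd_fib_of_fibZ_dvd {n m : ℕ} (h : 0 < fibZ n) (hdvd : fibZ n ∣ m) :
    n ∣ Nat.fib m := (dvd_fib_fibZ h).trans (Nat.fib_dvd _ _ hdvd)

lemma fibZ_mul_dvd {a b : ℕ} (hcop : Nat.Coprime a b)
    (hza : 0 < fibZ a) (hzb : 0 < fibZ b) :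
    fibZ (a*b) ∣ Nat.lcm (fibZ a) (fibZ b) ∧ 0 < fibZ (a*b) := by
  have hLpos : 0 < Nat.lcm (fibZ a) (fibZ b) :=
    Nat.pos_of_ne_zero (Nat.lcm_ne_zero (by omega) (by omega))
  have hda : a ∣ Nat.fib (Nat.lcm (fibZ a) (fibZ b)) :=
    dvd_fib_of_fibZ_dvd hza (Nat.dvd_lcm_left _ _)
  have hdb : b ∣ Nat.fib (Nat.lcm (fibZ a) (fibZ b)) :=
    dvd_fib_of_fibZ_dvd hzb (Nat.dvd_lcm_right _ _)
  have hdab : a * b ∣ Nat.fib (Nat.lcm (fibZ a) (fibZ b)) :=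
    hcop.mul_dvd_of_dvd_of_dvd hda hdb
  exact ⟨fibZ_dvd_of_dvd hLpos hdab, fibZ_pos_of hLpos hdab⟩

lemma fibZ_pow_dvd {p : ℕ} (e : ℕ) (hz : 0 < fibZ p) :
    fibZ (p^(e+1)) ∣ p^e * fibZ p ∧ 0 < fibZ (p^(e+1)) := by
  have hp0 : p ≠ 0 := by
    intro h
    subst h
    have := dvd_fib_fibZ hz
    rw [Nat.zero_dvd, Nat.fib_eq_zero] at this
    omega
  have hw : p^(e+1) ∣ Nat.fib (p^e * fibZ p) := pow_dvd_fib_pow_mul p (fibZ p) (dvd_fib_fibZ hz) e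
  have hwpos : 0 < p^e * fibZ p := Nat.mul_pos (Nat.pow_pos (Nat.pos_of_ne_zero hp0)) hz
  exact ⟨fibZ_dvd_of_dvd hwpos hw, fibZ_pos_of hwpos hw⟩

lemma fibZ_two_dvd : fibZ 2 ∣ 3 ∧ 0 < fibZ 2 := by
  have h : (2:ℕ) ∣ Nat.fib 3 := by decide
  exact ⟨fibZ_dvd_of_dvd (by norm_num) h, fibZ_pos_of (by norm_num) h⟩

lemma fibZ_five_dvd : fibZ 5 ∣ 5 ∧ 0 < fibZ 5 := by
  have h : (5:ℕ) ∣ Nat.fib 5 := by decide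
  exact ⟨fibZ_dvd_of_dvd (by norm_num) h, fibZ_pos_of (by norm_num) h⟩

lemma fibZ_one_dvd : fibZ 1 ∣ 1 ∧ 0 < fibZ 1 := by
  have h : (1:ℕ) ∣ Nat.fib 1 := by decide
  exact ⟨fibZ_dvd_of_dvd (by norm_num) h, fibZ_pos_of (by norm_num) h⟩

lemma fibZ_odd_bound : ∀ r : ℕ, Odd r → ¬(5 ∣ r) →
    r = 1 ∨ ∃ c, 0 < c ∧ fibZ r ∣ 2*c ∧ 3*c ≤ 2*r ∧ 0 < fibZ r := by
  intro r
  induction r using Nat.recOnPosPrimePosCoprime with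
  | zero =>
    intro hodd _
    exact absurd hodd (by simp [Nat.odd_iff])
  | one =>
    intro _ _
    exact Or.inl rfl
  | prime_pow p e hp' he =>
    intro hodd h5
    have hp : p.Prime := hp'
    have hpdvd : p ∣ p^e := dvd_pow_self p (by omega)
    have hp2 : p ≠ 2 := by
      rintro rfl
      rw [Nat.odd_iff] at hodd
      have : 2 ∣ 2^e := hpdvd
      omega
    have hp5 : p ≠ 5 := by
      rintro rfl
      exact h5 hpdvd
    have hp3 : 3 ≤ p := by
      have := hp.two_le
      omega
    have hodd' : p % 2 = 1 := Nat.odd_iff.mp (hp.odd_of_ne_two hp2)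
    right
    rcases prime_dvd_fib_sub_or_add p hp hp2 hp5 with hdvd | hdvd
    · -- z(p) ∣ p - 1
      have hz_p_pos : 0 < fibZ p := fibZ_pos_of (by omega) hdvd
      have hz_p_dvd : fibZ p ∣ p - 1 := fibZ_dvd_of_dvd (by omega) hdvd
      obtain ⟨e', rfl⟩ : ∃ e', e = e' + 1 := ⟨e - 1, by omega⟩
      obtain ⟨hzpow, hzpowpos⟩ := fibZ_pow_dvd e' hz_p_pos
      set d := (p - 1) / 2 with hd
      have hd2 : p - 1 = 2 * d := by omega
      refine ⟨p^e' * d, ?_, ?_, ?_, hzpowpos⟩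
      · have : 0 < d := by omega
        positivity
      · refine hzpow.trans ?_
        have : p^e' * fibZ p ∣ p^e' * (p-1) := Nat.mul_dvd_mul_left _ hz_p_dvd
        refine this.trans ?_
        rw [hd2, show p^e' * (2*d) = 2*(p^e'*d) by ring]
      · have h3d : 3 * d ≤ 2 * p := by omega
        calc 3 * (p^e' * d) = p^e' * (3 * d) := by ring
        _ ≤ p^e' * (2 * p) := Nat.mul_le_mul_left _ h3d
        _ = 2 * p^(e'+1) := by ring
    · -- z(p) ∣ p + 1
      have hz_p_pos : 0 < fibZ p := fibZ_pos_of (by omega) hdvd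
      have hz_p_dvd : fibZ p ∣ p + 1 := fibZ_dvd_of_dvd (by omega) hdvd
      obtain ⟨e', rfl⟩ : ∃ e', e = e' + 1 := ⟨e - 1, by omega⟩
      obtain ⟨hzpow, hzpowpos⟩ := fibZ_pow_dvd e' hz_p_pos
      set d := (p + 1) / 2 with hd
      have hd2 : p + 1 = 2 * d := by omega
      refine ⟨p^e' * d, ?_, ?_, ?_, hzpowpos⟩
      · have : 0 < d := by omega
        positivity
      · refine hzpow.trans ?_
        have : p^e' * fibZ p ∣ p^e' * (p+1) := Nat.mul_dvd_mul_left _ hz_p_dvd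
        refine this.trans ?_
        rw [hd2, show p^e' * (2*d) = 2*(p^e'*d) by ring]
      · have h3d : 3 * d ≤ 2 * p := by omega
        calc 3 * (p^e' * d) = p^e' * (3 * d) := by ring
        _ ≤ p^e' * (2 * p) := Nat.mul_le_mul_left _ h3d
        _ = 2 * p^(e'+1) := by ring
  | coprime a b ha hb hcop iha ihb =>
    intro hodd h5
    rw [Nat.odd_mul] at hodd
    have hoa := hodd.1
    have hob := hodd.2
    have h5a : ¬ 5 ∣ a := fun h => h5 (h.trans (Dvd.intro b rfl))
    have h5b : ¬ 5 ∣ b := fun h => h5 (h.trans (Dvd.intro_left a rfl))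
    rcases iha hoa h5a with rfl | ⟨ca, hca, hza, hba, hzapos⟩
    · omega
    rcases ihb hob h5b with rfl | ⟨cb, hcb, hzb, hbb, hzbpos⟩
    · omega
    right
    obtain ⟨hmul, hmulpos⟩ := fibZ_mul_dvd hcop hzapos hzbpos
    refine ⟨ca * cb, Nat.mul_pos hca hcb, ?_, ?_, hmulpos⟩
    · refine hmul.trans (Nat.lcm_dvd ?_ ?_)
      · exact hza.trans ⟨cb, by ring⟩
      · exact hzb.trans ⟨ca, by ring⟩
    · nlinarith

theorem fibZ_le_two_mul (n : ℕ) (hn : 0 < n) : fibZ n ≤ 2 * n := by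
  set a := n.factorization 2 with hadef
  set m := n / 2^a with hmdef
  have hn0 : n ≠ 0 := by omega
  have h2m : 2^a * m = n := Nat.ordProj_mul_ordCompl_eq_self n 2
  have hm0 : m ≠ 0 := by
    intro h
    rw [h, mul_zero] at h2m
    omega
  have hnd2 : ¬ 2 ∣ m := Nat.not_dvd_ordCompl Nat.prime_two hn0
  set b := m.factorization 5 with hbdef
  set r := m / 5^b with hrdef
  have h5r : 5^b * r = m := Nat.ordProj_mul_ordCompl_eq_self m 5
  have hr0 : r ≠ 0 := by
    intro h
    rw [h, mul_zero] at h5r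
    omega
  have hnd5 : ¬ 5 ∣ r := Nat.not_dvd_ordCompl (by norm_num) hm0
  have hrdvdm : r ∣ m := Dvd.intro_left _ h5r
  have hnd2r : ¬ 2 ∣ r := fun h => hnd2 (h.trans hrdvdm)
  have hoddr : Odd r := Nat.odd_iff.mpr (by omega)
  clear_value a m b r
  -- positivity and divisibility facts for the three parts
  have hz2 := fibZ_two_dvd
  have hz5 := fibZ_five_dvd
  have hz1 := fibZ_one_dvd
  have hz2a : 0 < fibZ (2^a) ∧ ∀ T, ((a = 0 ∧ 1 ∣ T) ∨ (∃ a', a = a' + 1 ∧ 2^a' * 3 ∣ T)) → fibZ (2^a) ∣ T := by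
    constructor
    · rcases Nat.eq_zero_or_pos a with rfl | hapos
      · simpa using hz1.2
      · obtain ⟨a', rfl⟩ : ∃ a', a = a' + 1 := ⟨a - 1, by omega⟩
        exact (fibZ_pow_dvd a' hz2.2).2
    · rintro T (⟨rfl, hT⟩ | ⟨a', rfl, hT⟩)
      · simpa using hz1.1.trans hT
      · refine (fibZ_pow_dvd a' hz2.2).1.trans (Dvd.dvd.trans ?_ hT)
        exact Nat.mul_dvd_mul_left _ hz2.1
  have hz5b : 0 < fibZ (5^b) ∧ fibZ (5^b) ∣ 5^b := by
    rcases Nat.eq_zero_or_pos b with rfl | hbpos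
    · constructor
      · simpa using hz1.2
      · simpa using hz1.1
    · obtain ⟨b', rfl⟩ : ∃ b', b = b' + 1 := ⟨b - 1, by omega⟩
      refine ⟨(fibZ_pow_dvd b' hz5.2).2, (fibZ_pow_dvd b' hz5.2).1.trans ?_⟩
      refine (Nat.mul_dvd_mul_left _ hz5.1).trans ?_
      rw [pow_succ]
  -- coprimality
  have hcop5r : Nat.Coprime (5^b) r :=
    Nat.Coprime.pow_left _ ((Nat.Prime.coprime_iff_not_dvd (by norm_num)).mpr hnd5)
  have hcop2m : Nat.Coprime (2^a) m :=
    Nat.Coprime.pow_left _ ((Nat.Prime.coprime_iff_not_dvd Nat.prime_two).mpr hnd2)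
  -- bound on fibZ r
  rcases fibZ_odd_bound r hoddr hnd5 with hr1 | ⟨c, hc, hzrc, hbr, hzrpos⟩
  case inl =>
    -- r = 1 : m = 5^b
    have hm5 : m = 5^b := by rw [← h5r, hr1, mul_one]
    have hzm : 0 < fibZ m ∧ fibZ m ∣ 5^b := by
      rw [hm5]; exact ⟨hz5b.1, hz5b.2⟩
    subst hm5
    -- n = 2^a * 5^b
    obtain ⟨hnmul, hnpos⟩ := fibZ_mul_dvd hcop2m hz2a.1 hzm.1
    rw [h2m] at hnmul hnpos
    rcases Nat.eq_zero_or_pos a with rfl | hapos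
    · -- T = 5^b
      have hT : fibZ n ∣ 5^b := hnmul.trans (Nat.lcm_dvd (hz2a.2 _ (Or.inl ⟨rfl, one_dvd _⟩)) hzm.2)
      have := Nat.le_of_dvd (by positivity) hT
      omega
    · obtain ⟨a', rfl⟩ : ∃ a', a = a' + 1 := ⟨a - 1, by omega⟩
      rcases Nat.eq_zero_or_pos a' with rfl | ha'pos
      · -- a = 1, T = 3 * 5^b
        have hT : fibZ n ∣ 3 * 5^b := by
          refine hnmul.trans (Nat.lcm_dvd ?_ ?_)
          · exact hz2a.2 _ (Or.inr ⟨0, rfl, by simpa using ⟨5^b, by ring⟩⟩)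
          · exact hzm.2.trans ⟨3, by ring⟩
        have hle := Nat.le_of_dvd (by positivity) hT
        have : n = 2 * 5^b := by rw [← h2m]; ring
        omega
      · obtain ⟨a'', rfl⟩ : ∃ a'', a' = a'' + 1 := ⟨a' - 1, by omega⟩
        -- a = a'' + 2, T = 3 * 2^(a''+1) * 5^b
        have hT : fibZ n ∣ 3 * 2^(a''+1) * 5^b := by
          refine hnmul.trans (Nat.lcm_dvd ?_ ?_)
          · exact hz2a.2 _ (Or.inr ⟨a''+1, rfl, ⟨5^b, by ring⟩⟩)
          · exact hzm.2.trans ⟨3 * 2^(a''+1), by ring⟩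
        have hle := Nat.le_of_dvd (by positivity) hT
        have hneq : n = 2^(a''+2) * 5^b := by rw [← h2m]
        have : 3 * 2^(a''+1) * 5^b ≤ 2 * n := by
          rw [hneq]
          calc 3 * 2^(a''+1) * 5^b ≤ 4 * 2^(a''+1) * 5^b := by
                have : (3:ℕ) * 2^(a''+1) ≤ 4 * 2^(a''+1) := Nat.mul_le_mul_right _ (by norm_num)
                exact Nat.mul_le_mul_right _ this
          _ = 2 * (2^(a''+2) * 5^b) := by ring
        omega
  case inr =>
    -- r > 1 case
    obtain ⟨hmmul, hmpos⟩ := fibZ_mul_dvd hcop5r hz5b.1 hzrpos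
    rw [h5r] at hmmul hmpos
    obtain ⟨hnmul, hnpos⟩ := fibZ_mul_dvd hcop2m hz2a.1 hmpos
    rw [h2m] at hnmul hnpos
    have hneq : n = 2^a * (5^b * r) := by rw [h5r, h2m]
    rcases Nat.eq_zero_or_pos a with rfl | hapos
    · -- T = 2*c*5^b
      have hT : fibZ n ∣ 2 * c * 5^b := by
        refine hnmul.trans (Nat.lcm_dvd (hz2a.2 _ (Or.inl ⟨rfl, one_dvd _⟩)) ?_)
        refine hmmul.trans (Nat.lcm_dvd ?_ ?_)
        · exact hz5b.2.trans ⟨2*c, by ring⟩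
        · exact hzrc.trans ⟨5^b, by ring⟩
      have hle := Nat.le_of_dvd (by positivity) hT
      have hbound : 2 * c * 5^b ≤ 2 * n := by
        rw [hneq]
        have hcr : c ≤ r := by omega
        calc 2 * c * 5^b ≤ 2 * r * 5^b := by
              have := Nat.mul_le_mul_right (5^b) (Nat.mul_le_mul_left 2 hcr)
              exact this
        _ = 2 * (2^0 * (5^b * r)) := by ring
      omega
    · obtain ⟨a', rfl⟩ : ∃ a', a = a' + 1 := ⟨a - 1, by omega⟩
      rcases Nat.eq_zero_or_pos a' with rfl | ha'pos
      · -- a = 1, T = 6*c*5^b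
        have hT : fibZ n ∣ 6 * c * 5^b := by
          refine hnmul.trans (Nat.lcm_dvd ?_ ?_)
          · exact hz2a.2 _ (Or.inr ⟨0, rfl, ⟨2*c*5^b, by ring⟩⟩)
          refine hmmul.trans (Nat.lcm_dvd ?_ ?_)
          · exact hz5b.2.trans ⟨6*c, by ring⟩
          · exact hzrc.trans ⟨3*5^b, by ring⟩
        have hle := Nat.le_of_dvd (by positivity) hT
        have hbound : 6 * c * 5^b ≤ 2 * n := by
          rw [hneq]
          have h6c : 6 * c ≤ 4 * r := by omega
          calc 6 * c * 5^b ≤ 4 * r * 5^b := Nat.mul_le_mul_right _ h6c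
          _ = 2 * (2^(0+1) * (5^b * r)) := by ring
        omega
      · obtain ⟨a'', rfl⟩ : ∃ a'', a' = a'' + 1 := ⟨a' - 1, by omega⟩
        -- T = 3 * 2^(a''+1) * c * 5^b
        have hT : fibZ n ∣ 3 * 2^(a''+1) * c * 5^b := by
          refine hnmul.trans (Nat.lcm_dvd ?_ ?_)
          · exact hz2a.2 _ (Or.inr ⟨a''+1, rfl, ⟨c * 5^b, by ring⟩⟩)
          refine hmmul.trans (Nat.lcm_dvd ?_ ?_)
          · exact hz5b.2.trans ⟨3 * 2^(a''+1) * c, by ring⟩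
          · exact hzrc.trans ⟨3 * 2^a'' * 5^b, by ring⟩
        have hle := Nat.le_of_dvd (by positivity) hT
        have hbound : 3 * 2^(a''+1) * c * 5^b ≤ 2 * n := by
          rw [hneq]
          have h3c : 3 * c ≤ 4 * r := by omega
          calc 3 * 2^(a''+1) * c * 5^b = 2^(a''+1) * (3 * c) * 5^b := by ring
          _ ≤ 2^(a''+1) * (4 * r) * 5^b := by
              exact Nat.mul_le_mul_right _ (Nat.mul_le_mul_left _ h3c)
          _ = 2 * (2^(a''+2) * (5^b * r)) := by ring
        omega
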